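/- Let S ⊂ ℝ be a finite set with at least two elements, δ_min = min{|x − y| : x, y ∈ S, x ≠ y} and δ_max = max{|x − y| : x, y ∈ S}. Fix b ≥ δ_max/δ_min + 1, let b⃗ = (b, b², …, b^d)ᵀ ∈ ℝ^d and q = b⃗/‖b⃗‖₂. Fix a ≠ 0 and ε > 0 and define the scalar RMS-normalization g₃(x) = a·x/√(ε + x²). Then the map f : S^d → ℝ given by f(H) = g₃(Hᵀ q) is injective. -/
import Mathlib


open Matrix

open Finset
lemma g3_inj {a ε : ℝ} (ha : a ≠ 0) (hε : 0 < ε) {x y : ℝ}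
    (h : a * x / Real.sqrt (ε + x ^ 2) = a * y / Real.sqrt (ε + y ^ 2)) : x = y := by
  have hx : 0 < Real.sqrt (ε + x ^ 2) := Real.sqrt_pos.2 (by positivity)
  have hy : 0 < Real.sqrt (ε + y ^ 2) := Real.sqrt_pos.2 (by positivity)
  rw [div_eq_div_iff hx.ne' hy.ne'] at h
  have h' : x * Real.sqrt (ε + y ^ 2) = y * Real.sqrt (ε + x ^ 2) :=
    mul_left_cancel₀ ha (by linear_combination h)
  have hx2 : Real.sqrt (ε + x ^ 2) ^ 2 = ε + x ^ 2 := Real.sq_sqrt (by positivity)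
  have hy2 : Real.sqrt (ε + y ^ 2) ^ 2 = ε + y ^ 2 := Real.sq_sqrt (by positivity)
  have hsq : x ^ 2 * (ε + y ^ 2) = y ^ 2 * (ε + x ^ 2) := by
    have h2 := congrArg (· ^ 2) h'
    simp only [mul_pow, hx2, hy2] at h2
    linarith
  have hxy2 : x ^ 2 = y ^ 2 := by nlinarith
  rcases sq_eq_sq_iff_eq_or_eq_neg.1 hxy2 with h1 | h1
  · exact h1
  · have hyy : Real.sqrt (ε + y ^ 2) = Real.sqrt (ε + x ^ 2) := by
      rw [hxy2]
    have h2 : -y * Real.sqrt (ε + y ^ 2) = y * Real.sqrt (ε + y ^ 2) := by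
      calc -y * Real.sqrt (ε + y ^ 2) = x * Real.sqrt (ε + y ^ 2) := by rw [h1]
        _ = y * Real.sqrt (ε + x ^ 2) := h'
        _ = y * Real.sqrt (ε + y ^ 2) := by rw [hyy]
    have hy0 : y = 0 := by
      have := mul_right_cancel₀ hy.ne' h2
      linarith
    rw [h1, hy0, neg_zero]

lemma sum_inj {d : ℕ} (S : Finset ℝ) (δmin δmax b : ℝ)
    (hδmin_pos : 0 < δmin)
    (hlow : ∀ x ∈ S, ∀ y ∈ S, x ≠ y → δmin ≤ |x - y|)
    (hhigh : ∀ x ∈ S, ∀ y ∈ S, |x - y| ≤ δmax)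
    (hb2 : 2 ≤ b) (hδ : δmax ≤ δmin * (b - 1))
    {H H' : Fin d → ℝ} (hH : ∀ i, H i ∈ S) (hH' : ∀ i, H' i ∈ S)
    (heq : ∑ i, H i * b ^ ((i : ℕ) + 1) = ∑ i, H' i * b ^ ((i : ℕ) + 1)) :
    H = H' := by
  by_contra hne
  set D : Fin d → ℝ := fun i => H i - H' i with hD
  set T : Finset (Fin d) := univ.filter (fun i => D i ≠ 0) with hT
  have hTne : T.Nonempty := by
    obtain ⟨i, hi⟩ := Function.ne_iff.1 hne
    exact ⟨i, by simp [hT, hD, sub_ne_zero.2 hi]⟩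
  set m : Fin d := T.max' hTne with hm
  have hmT : m ∈ T := T.max'_mem hTne
  have hDm : D m ≠ 0 := (mem_filter.1 hmT).2
  have hbpos : (0:ℝ) < b := by linarith
  set n : ℕ := (m : ℕ) with hn
  have hsum0 : ∑ i, D i * b ^ ((i : ℕ) + 1) = 0 := by
    simp only [hD, sub_mul]
    rw [Finset.sum_sub_distrib, heq, sub_self]
  have hsplit : D m * b ^ (n + 1)
      = -∑ i ∈ T.erase m, D i * b ^ ((i : ℕ) + 1) := by
    have h1 : ∑ i, D i * b ^ ((i : ℕ) + 1)
        = D m * b ^ (n + 1) + ∑ i ∈ univ.erase m, D i * b ^ ((i : ℕ) + 1) :=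
      (Finset.add_sum_erase _ _ (mem_univ m)).symm
    have h2 : ∑ i ∈ univ.erase m, D i * b ^ ((i : ℕ) + 1)
        = ∑ i ∈ T.erase m, D i * b ^ ((i : ℕ) + 1) := by
      refine (Finset.sum_subset (Finset.erase_subset_erase m (subset_univ T)) ?_).symm
      intro i hi hiT
      have hDi : D i = 0 := by
        by_contra hDi
        exact hiT (Finset.mem_erase.2 ⟨(Finset.mem_erase.1 hi).1,
          mem_filter.2 ⟨mem_univ i, hDi⟩⟩)
      simp [hDi]
    rw [h1, h2] at hsum0
    linarith
  have hDle : ∀ i, |D i| ≤ δmax := fun i => hhigh _ (hH i) _ (hH' i)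
  have hδmax_nonneg : 0 ≤ δmax := le_trans (abs_nonneg _) (hDle m)
  -- step 1: bound the tail sum by a geometric sum over `range n`
  have hlt : ∀ i ∈ T.erase m, (i : ℕ) < n := by
    intro i hi
    obtain ⟨hne', hiT⟩ := Finset.mem_erase.1 hi
    have : i ≤ m := Finset.le_max' T i hiT
    exact Fin.lt_iff_val_lt_val.1 (lt_of_le_of_ne this hne')
  have hstep1 : |D m| * b ^ (n + 1) ≤ δmax * ∑ j ∈ range n, b ^ (j + 1) := by
    have habs : |D m| * b ^ (n + 1) = |D m * b ^ (n + 1)| := by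
      rw [abs_mul, abs_of_pos (pow_pos hbpos _)]
    rw [habs, hsplit, abs_neg]
    calc |∑ i ∈ T.erase m, D i * b ^ ((i : ℕ) + 1)|
        ≤ ∑ i ∈ T.erase m, |D i * b ^ ((i : ℕ) + 1)| := Finset.abs_sum_le_sum_abs _ _
      _ ≤ ∑ i ∈ T.erase m, δmax * b ^ ((i : ℕ) + 1) := by
          refine Finset.sum_le_sum fun i _ => ?_
          rw [abs_mul, abs_of_pos (pow_pos hbpos _)]
          exact mul_le_mul_of_nonneg_right (hDle i) (pow_pos hbpos _).le
      _ = δmax * ∑ i ∈ T.erase m, b ^ ((i : ℕ) + 1) := by rw [Finset.mul_sum]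
      _ ≤ δmax * ∑ j ∈ range n, b ^ (j + 1) := by
          refine mul_le_mul_of_nonneg_left ?_ hδmax_nonneg
          have himg : ∑ i ∈ T.erase m, b ^ ((i : ℕ) + 1)
              = ∑ j ∈ (T.erase m).image Fin.val, b ^ (j + 1) := by
            rw [Finset.sum_image (fun x _ y _ h => Fin.val_injective h)]
          rw [himg]
          refine Finset.sum_le_sum_of_subset_of_nonneg ?_
            (fun j _ _ => (pow_pos hbpos _).le)
          intro j hj
          obtain ⟨i, hi, rfl⟩ := Finset.mem_image.1 hj
          exact Finset.mem_range.2 (hlt i hi)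
  -- step 2: geometric sum identity
  have hgeom : (∑ j ∈ range n, b ^ (j + 1)) * (b - 1) = b ^ (n + 1) - b := by
    have h1 : ∑ j ∈ range n, b ^ (j + 1) = b * ∑ j ∈ range n, b ^ j := by
      rw [Finset.mul_sum]
      exact Finset.sum_congr rfl fun j _ => by ring
    rw [h1, mul_assoc, geom_sum_mul]
    ring
  have hGnonneg : 0 ≤ ∑ j ∈ range n, b ^ (j + 1) :=
    Finset.sum_nonneg fun j _ => (pow_pos hbpos _).le
  have hlowm : δmin ≤ |D m| := hlow _ (hH m) _ (hH' m) (sub_ne_zero.1 hDm)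
  have hbn1 : (0:ℝ) < b ^ (n + 1) := pow_pos hbpos _
  nlinarith [mul_le_mul_of_nonneg_right hδ hGnonneg,
    mul_le_mul_of_nonneg_right hlowm hbn1.le,
    mul_pos hδmin_pos hbpos,
    mul_le_mul_of_nonneg_left hgeom.le hδmin_pos.le,
    mul_le_mul_of_nonneg_left hgeom.ge hδmin_pos.le]


/-- With `b⃗ = (b, b², …, b^d)`, `q = b⃗/‖b⃗‖₂`, and the scalar RMS-normalization
`g₃(x) = a·x/√(ε + x²)` (`a ≠ 0`, `ε > 0`), the map `H ↦ g₃(Hᵀq)` is injective on `S^d`,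
provided `b ≥ δ_max/δ_min + 1`. -/
theorem rmsnorm_readout_injective {d : ℕ} (S : Finset ℝ) (hS : 2 ≤ S.card)
    (δmin δmax b : ℝ)
    (hmin : IsLeast {r : ℝ | ∃ x ∈ S, ∃ y ∈ S, x ≠ y ∧ r = |x - y|} δmin)
    (hmax : IsGreatest {r : ℝ | ∃ x ∈ S, ∃ y ∈ S, r = |x - y|} δmax)
    (hb : δmax / δmin + 1 ≤ b)
    (a ε : ℝ) (ha : a ≠ 0) (hε : 0 < ε)
    (bvec q : Fin d → ℝ)
    (hbvec : bvec = fun i : Fin d => b ^ ((i : ℕ) + 1))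
    (hq : q = (Real.sqrt (bvec ⬝ᵥ bvec))⁻¹ • bvec) :
    Set.InjOn (fun H : Fin d → ℝ => a * (H ⬝ᵥ q) / Real.sqrt (ε + (H ⬝ᵥ q) ^ 2))
      {H : Fin d → ℝ | ∀ i, H i ∈ S} := by
  -- basic facts about δmin, δmax, b
  obtain ⟨⟨x0, hx0, y0, hy0, hxy0, hδmin_eq⟩, hmin_lb⟩ := hmin
  obtain ⟨_, hmax_ub⟩ := hmax
  have hδmin_pos : 0 < δmin := hδmin_eq ▸ abs_pos.2 (sub_ne_zero.2 hxy0)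
  have hδminmax : δmin ≤ δmax := hmax_ub ⟨x0, hx0, y0, hy0, hδmin_eq⟩
  have hb2 : 2 ≤ b := by
    have h1 : 1 ≤ δmax / δmin := (one_le_div hδmin_pos).2 hδminmax
    linarith
  have hδ : δmax ≤ δmin * (b - 1) := by
    have : δmax / δmin ≤ b - 1 := by linarith
    calc δmax = δmax / δmin * δmin := by field_simp
      _ ≤ (b - 1) * δmin := mul_le_mul_of_nonneg_right this hδmin_pos.le
      _ = δmin * (b - 1) := mul_comm _ _
  have hlow : ∀ x ∈ S, ∀ y ∈ S, x ≠ y → δmin ≤ |x - y| := fun x hx y hy hxy =>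
    hmin_lb ⟨x, hx, y, hy, hxy, rfl⟩
  have hhigh : ∀ x ∈ S, ∀ y ∈ S, |x - y| ≤ δmax := fun x hx y hy =>
    hmax_ub ⟨x, hx, y, hy, rfl⟩
  intro H hH H' hH' heq
  simp only at heq
  have hdot : H ⬝ᵥ q = H' ⬝ᵥ q := g3_inj ha hε heq
  rcases Nat.eq_zero_or_pos d with hd | hd
  · funext i
    exact absurd i.2 (by omega)
  · -- the normalizing constant is positive
    have hbpos : (0:ℝ) < b := by linarith
    have hbb : 0 < bvec ⬝ᵥ bvec := by
      rw [hbvec]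
      have : (0:Fin d → ℝ) ⬝ᵥ (0:Fin d → ℝ) = 0 := by simp
      refine Finset.sum_pos (fun i _ => ?_) ?_
      · exact mul_pos (pow_pos hbpos _) (pow_pos hbpos _)
      · exact ⟨⟨0, hd⟩, Finset.mem_univ _⟩
    have hc : (Real.sqrt (bvec ⬝ᵥ bvec))⁻¹ ≠ 0 :=
      inv_ne_zero (Real.sqrt_pos.2 hbb).ne'
    have hdot' : ∀ G : Fin d → ℝ, G ⬝ᵥ q
        = (Real.sqrt (bvec ⬝ᵥ bvec))⁻¹ * ∑ i, G i * b ^ ((i : ℕ) + 1) := by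
      intro G
      rw [hq]
      simp only [dotProduct, Pi.smul_apply, smul_eq_mul, hbvec, Finset.mul_sum]
      exact Finset.sum_congr rfl fun i _ => by ring
    rw [hdot' H, hdot' H'] at hdot
    have hsums : ∑ i, H i * b ^ ((i : ℕ) + 1) = ∑ i, H' i * b ^ ((i : ℕ) + 1) :=
      mul_left_cancel₀ hc hdot
    exact sum_inj S δmin δmax b hδmin_pos hlow hhigh hb2 hδ hH hH' hsums
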